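/- Let X ∈ D_perf(R), let x ∈ R, let Y ∈ D(R), and let f : X → Y be a morphism in D(R). Suppose that for every i ∈ ℤ and every α ∈ H_i(Y) there exists n ∈ ℕ with x^n α = 0. Then there exists l ∈ ℕ such that x^l f = 0 in Hom_{D(R)}(X, Y). -/

import Mathlib

set_option linter.unusedSectionVars false



open CategoryTheory CategoryTheory.Limits

universe w w' u

/-- The `S`-module structure on morphism groups `Hom_{D(S)}(Q M, Q N)` of the derived
category of a commutative ring `S`, where `s • f = f ≫ Q(s • 𝟙 N)`. -/
noncomputable instance derivedHomModule (S : Type u) [CommRing S]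
    [HasDerivedCategory.{w} (ModuleCat.{u} S)]
    (M N : CochainComplex (ModuleCat.{u} S) ℤ) :
    Module S (DerivedCategory.Q.obj M ⟶ DerivedCategory.Q.obj N) where
  smul s f := f ≫ DerivedCategory.Q.map (s • 𝟙 N)
  one_smul f := by
    show f ≫ DerivedCategory.Q.map ((1 : S) • 𝟙 N) = f
    simp
  mul_smul s t f := by
    show f ≫ DerivedCategory.Q.map ((s * t) • 𝟙 N) =
      (f ≫ DerivedCategory.Q.map (t • 𝟙 N)) ≫ DerivedCategory.Q.map (s • 𝟙 N)
    rw [Category.assoc, ← DerivedCategory.Q.map_comp]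
    congr 2
    simp [Linear.smul_comp, Linear.comp_smul, smul_smul, mul_comm]
  smul_zero s := by
    show (0 : DerivedCategory.Q.obj M ⟶ DerivedCategory.Q.obj N) ≫ _ = 0
    simp
  smul_add s f g := by
    show (f + g) ≫ _ = f ≫ _ + g ≫ _
    simp
  add_smul s t f := by
    show f ≫ DerivedCategory.Q.map ((s + t) • 𝟙 N) = f ≫ _ + f ≫ _
    rw [add_smul, DerivedCategory.Q.map_add, Preadditive.comp_add]
  zero_smul f := by
    show f ≫ DerivedCategory.Q.map ((0 : S) • 𝟙 N) = 0
    simp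


section AuxLemmas

variable {R : Type u} [CommRing R]

lemma aux_cycle_torsion (Y : CochainComplex (ModuleCat.{u} R) ℤ) (x : R)
    (hY : ∀ (i : ℤ) (α : Y.homology i), ∃ n : ℕ, x ^ n • α = 0)
    (j : ℤ) (z : Y.X j) (hz : Y.d j (j+1) z = 0) :
    ∃ (n : ℕ) (y : Y.X (j-1)), Y.d (j-1) j y = x ^ n • z := by
  have hprev : (ComplexShape.up ℤ).prev j = j - 1 := by simp
  have hnext : (ComplexShape.up ℤ).next j = j + 1 := by simp
  set S := Y.sc' (j-1) j (j+1) with hS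
  let e : Y.sc j ≅ S := Y.isoSc' (j-1) j (j+1) hprev hnext
  let κ : S.moduleCatLeftHomologyData.H ⟶ (Y.sc j).homology :=
    S.moduleCatHomologyIso.inv ≫ (ShortComplex.homologyMapIso e).inv
  have hκ : Function.Injective κ :=
    (ModuleCat.mono_iff_injective κ).1 inferInstance
  have hz' : S.g z = 0 := hz
  set zz : LinearMap.ker S.g.hom := ⟨z, hz'⟩ with hzz
  obtain ⟨n, hn⟩ := hY j (κ (Submodule.Quotient.mk zz))
  have h2 : κ ((x ^ n : R) • (Submodule.Quotient.mk zz : S.moduleCatLeftHomologyData.H)) = 0 := by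
    exact (LinearMap.map_smul κ.hom _ _).trans hn
  have h3' : ((x ^ n : R) • (Submodule.Quotient.mk zz : S.moduleCatLeftHomologyData.H))
      = (0 : S.moduleCatLeftHomologyData.H) := hκ (h2.trans (map_zero _).symm)
  have h3 : (Submodule.Quotient.mk ((x ^ n : R) • zz) :
      LinearMap.ker S.g.hom ⧸ LinearMap.range S.moduleCatToCycles) = 0 := by
    rw [Submodule.Quotient.mk_smul]
    exact h3'
  rw [Submodule.Quotient.mk_eq_zero] at h3
  obtain ⟨y, hy⟩ := h3
  refine ⟨n, y, ?_⟩
  have := congrArg Subtype.val hy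
  exact this

lemma aux_step (P Y : CochainComplex (ModuleCat.{u} R) ℤ) (x : R)
    (hY : ∀ (i : ℤ) (α : Y.homology i), ∃ n : ℕ, x ^ n • α = 0)
    (j : ℤ) (hfg : Module.Finite R (P.X j)) (hproj : Module.Projective R (P.X j))
    (w : P.X j ⟶ Y.X j) (hw : w ≫ Y.d j (j+1) = 0) :
    ∃ (k : ℕ) (c : P.X j ⟶ Y.X (j-1)), c ≫ Y.d (j-1) j = x ^ k • w := by
  have hcyc : ∀ p : P.X j, Y.d j (j+1) (w p) = 0 := fun p => by
    have := ConcreteCategory.congr_hom hw p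
    simpa using this
  have hgen : ∀ p : P.X j, ∃ n : ℕ, x ^ n • w p ∈ LinearMap.range (Y.d (j-1) j).hom :=
    fun p => by
      obtain ⟨n, y, hy⟩ := aux_cycle_torsion Y x hY j (w p) (hcyc p)
      exact ⟨n, y, hy⟩
  choose nn hh using hgen
  obtain ⟨s, hs⟩ := hfg.fg_top
  have key : ∀ p : P.X j, x ^ (s.sup nn) • w p ∈ LinearMap.range (Y.d (j-1) j).hom := by
    have hsub : (⊤ : Submodule R (P.X j)) ≤ Submodule.comap
        ((x ^ (s.sup nn) : R) • (show P.X j →ₗ[R] Y.X j from w.hom))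
        (LinearMap.range (Y.d (j-1) j).hom) := by
      rw [← hs]
      refine Submodule.span_le.2 (fun p hp => ?_)
      have hp' : p ∈ s := hp
      simp only [SetLike.mem_coe, Submodule.mem_comap, LinearMap.smul_apply]
      have h1 : (x ^ (s.sup nn) : R) • w p
          = (x ^ (s.sup nn - nn p) : R) • ((x ^ nn p : R) • w p) := by
        have hle : nn p ≤ s.sup nn := Finset.le_sup hp'
        rw [smul_smul, ← pow_add, Nat.sub_add_cancel hle]
      rw [h1]
      exact Submodule.smul_mem _ _ (hh p)
    intro p
    have := hsub (Submodule.mem_top (x := p))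
    simpa using this
  haveI := hproj
  obtain ⟨h, hcomp⟩ := Module.projective_lifting_property
    ((Y.d (j-1) j).hom : Y.X (j-1) →ₗ[R] Y.X j).rangeRestrict
    (LinearMap.codRestrict (LinearMap.range (Y.d (j-1) j).hom)
      ((x ^ (s.sup nn) : R) • (show P.X j →ₗ[R] Y.X j from w.hom)) (fun p => key p))
    (LinearMap.surjective_rangeRestrict _)
  refine ⟨s.sup nn, (show P.X j ⟶ Y.X (j-1) from ModuleCat.ofHom h), ?_⟩
  ext p
  have := congrArg Subtype.val (LinearMap.congr_fun hcomp p)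
  simpa using this

lemma aux_homotopy (P Y : CochainComplex (ModuleCat.{u} R) ℤ) (x : R)
    (hY : ∀ (i : ℤ) (α : Y.homology i), ∃ n : ℕ, x ^ n • α = 0)
    (a b : ℤ) (hzero : ∀ n : ℤ, (n < a ∨ b < n) → IsZero (P.X n))
    (hfg : ∀ n : ℤ, Module.Finite R (P.X n)) (hproj : ∀ n : ℤ, Module.Projective R (P.X n))
    (g : P ⟶ Y) :
    ∃ k : ℕ, Nonempty (Homotopy ((x ^ k : R) • g) 0) := by
  have key : ∀ m : ℕ, ∃ (k : ℕ) (hom : ∀ i j : ℤ, P.X i ⟶ Y.X j),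
      (∀ i j, ¬(j = i - 1 ∧ b - m < i) → hom i j = 0) ∧
      (∀ i, b - m < i → (x ^ k : R) • g.f i
        = P.d i (i+1) ≫ hom (i+1) i + hom i (i-1) ≫ Y.d (i-1) i) := by
    intro m
    induction m with
    | zero =>
      refine ⟨0, fun _ _ => 0, fun _ _ _ => rfl, fun i hi => ?_⟩
      have hz : IsZero (P.X i) := hzero i (Or.inr (by omega))
      exact hz.eq_of_src _ _
    | succ m ih =>
      obtain ⟨k, hom, hsupp, hcomm⟩ := ih
      set j : ℤ := b - m with hj
      set w : P.X j ⟶ Y.X j := (x ^ k : R) • g.f j - P.d j (j+1) ≫ hom (j+1) j with hwdef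
      have hcj : (x ^ k : R) • g.f (j+1)
          = P.d (j+1) (j+2) ≫ hom (j+2) (j+1) + hom (j+1) j ≫ Y.d j (j+1) := by
        have h := hcomm (j+1) (by omega)
        rw [show j+1+1 = j+2 from by ring, show j+1-1 = j from by ring] at h
        exact h
      have hw : w ≫ Y.d j (j+1) = 0 := by
        have h1 : hom (j+1) j ≫ Y.d j (j+1)
            = (x ^ k : R) • g.f (j+1) - P.d (j+1) (j+2) ≫ hom (j+2) (j+1) := by
          rw [hcj]; abel
        rw [hwdef, Preadditive.sub_comp, Linear.smul_comp, g.comm j (j+1),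
          Category.assoc, h1, Preadditive.comp_sub, Linear.comp_smul]
        simp
      obtain ⟨k', c, hc⟩ := aux_step P Y x hY j (hfg j) (hproj j) w hw
      let homc : ∀ i i' : ℤ, P.X i ⟶ Y.X i' := fun i i' =>
        if h : i = j ∧ i' = j - 1 then
          eqToHom (congrArg P.X h.1) ≫ c ≫ eqToHom (congrArg Y.X h.2.symm)
        else 0
      have homc_self : homc j (j-1) = c := by simp [homc]
      have homc_ne : ∀ i i', ¬(i = j ∧ i' = j - 1) → homc i i' = 0 :=
        fun i i' h => dif_neg h
      refine ⟨k' + k, fun i i' => (x ^ k' : R) • hom i i' + homc i i', ?_, ?_⟩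
      · intro i i' hni
        show x ^ k' • hom i i' + homc i i' = 0
        have h1 : ¬(i' = i - 1 ∧ b - (m : ℤ) < i) := by
          intro hcon
          exact hni ⟨hcon.1, by push_cast; omega⟩
        rw [hsupp i i' h1, smul_zero, zero_add]
        refine homc_ne i i' ?_
        rintro ⟨rfl, rfl⟩
        exact hni ⟨by omega, by push_cast; omega⟩
      · intro i hi
        show (x ^ (k' + k) : R) • g.f i
          = P.d i (i+1) ≫ (x ^ k' • hom (i+1) i + homc (i+1) i)
            + (x ^ k' • hom i (i-1) + homc i (i-1)) ≫ Y.d (i-1) i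
        by_cases hij : i = j
        · obtain rfl := hij
          have e1 : homc (j+1) j = 0 := homc_ne _ _ (by omega)
          have e2 : hom j (j-1) = 0 := hsupp _ _ (by omega)
          have e3 : homc j (j-1) = c := homc_self
          rw [e1, e2, e3, smul_zero, zero_add, add_zero, hc]
          rw [Linear.comp_smul, ← smul_add, pow_add, mul_smul]
          congr 1
          rw [hwdef]
          abel
        · have hlt : b - (m : ℤ) < i := by push_cast at hi; omega
          have e1 : homc (i+1) i = 0 := homc_ne _ _ (by omega)
          have e2 : homc i (i-1) = 0 := homc_ne _ _ (fun hcon => hij hcon.1)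
          rw [e1, e2, add_zero, add_zero, pow_add, mul_smul, hcomm i hlt]
          rw [smul_add, Linear.comp_smul, Linear.smul_comp]
  obtain ⟨k, hom, hsupp, hcomm⟩ := key (b - a + 1).toNat
  have hm : (b : ℤ) - (b - a + 1).toNat < a := by omega
  refine ⟨k, ⟨{ hom := hom, zero := ?_, comm := ?_ }⟩⟩
  · intro i i' h
    refine hsupp i i' ?_
    rintro ⟨rfl, -⟩
    exact h (by simp only [ComplexShape.up_Rel]; omega)
  · intro i
    have hrel1 : (ComplexShape.up ℤ).Rel i (i+1) := by simp
    have hrel2 : (ComplexShape.up ℤ).Rel (i-1) i := by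
      simp only [ComplexShape.up_Rel]; omega
    rw [dNext_eq hom hrel1, prevD_eq hom hrel2]
    by_cases hbi : b - ((b - a + 1).toNat : ℤ) < i
    · have := hcomm i hbi
      simp only [HomologicalComplex.zero_f, add_zero]
      exact this
    · have hz : IsZero (P.X i) := hzero i (Or.inl (by omega))
      exact hz.eq_of_src _ _

end AuxLemmas

variable (R : Type u) [CommRing R] [IsNoetherianRing R]

variable (R : Type u) [CommRing R] [IsNoetherianRing R]
  [HasDerivedCategory.{w} (ModuleCat.{u} R)]

/-- If `X` is perfect (represented by a bounded complex `P` of finitely generated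
projective modules), `x ∈ R`, and every homology class of `Y` is annihilated by some
power of `x`, then every morphism `f : X ⟶ Y` in `D(R)` is annihilated by some
power of `x`. -/
theorem pow_smul_hom_eq_zero
    (P Y : CochainComplex (ModuleCat.{u} R) ℤ)
    (hbd : ∃ a b : ℤ, ∀ n : ℤ, (n < a ∨ b < n) → IsZero (P.X n))
    (hfg : ∀ n : ℤ, Module.Finite R (P.X n))
    (hproj : ∀ n : ℤ, Module.Projective R (P.X n))
    (x : R) (f : DerivedCategory.Q.obj P ⟶ DerivedCategory.Q.obj Y)
    (hY : ∀ (i : ℤ) (α : Y.homology i), ∃ n : ℕ, x ^ n • α = 0) :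
    ∃ l : ℕ, x ^ l • f = 0 := by
  obtain ⟨a, b, hzero⟩ := hbd
  haveI : (HomotopyCategory.quasiIso (ModuleCat.{u} R)
      (ComplexShape.up ℤ)).HasLeftCalculusOfFractions := by
    rw [HomotopyCategory.quasiIso_eq_subcategoryAcyclic_W]
    infer_instance
  obtain ⟨φ, hφ⟩ := Localization.exists_leftFraction DerivedCategory.Qh
    (HomotopyCategory.quasiIso (ModuleCat.{u} R) (ComplexShape.up ℤ))
    (show DerivedCategory.Qh.obj
        ((HomotopyCategory.quotient _ _).obj P) ⟶ DerivedCategory.Qh.obj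
        ((HomotopyCategory.quotient _ _).obj Y) from f)
  obtain ⟨Z', f₀, s₀, hs₀, rfl⟩ := φ.cases
  obtain ⟨Z⟩ := Z'
  obtain ⟨g, rfl⟩ := (HomotopyCategory.quotient _ _).map_surjective f₀
  obtain ⟨t, rfl⟩ := (HomotopyCategory.quotient _ _).map_surjective s₀
  have ht : HomologicalComplex.quasiIso _ _ t :=
    (HomotopyCategory.quotient_map_mem_quasiIso_iff t).1 hs₀
  haveI htq : QuasiIso t := by
    rwa [HomologicalComplex.mem_quasiIso_iff] at ht
  -- transfer torsion hypothesis along the quasi-isomorphism t : Y ⟶ Z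
  have hZ : ∀ (i : ℤ) (α : Z.homology i), ∃ n : ℕ, x ^ n • α = 0 := by
    intro i α
    haveI : IsIso (HomologicalComplex.homologyMap t i) := by
      have := htq.quasiIsoAt i
      rwa [quasiIsoAt_iff_isIso_homologyMap] at this
    set e := asIso (HomologicalComplex.homologyMap t i) with he
    obtain ⟨n, hn⟩ := hY i (e.inv α)
    refine ⟨n, ?_⟩
    have h2 : e.hom (e.inv α) = α := by
      calc e.hom (e.inv α) = (e.inv ≫ e.hom) α := rfl
        _ = α := by rw [e.inv_hom_id]; rfl
    have h0 : e.hom (x ^ n • e.inv α) = (0 : Z.homology i) := by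
      rw [hn, map_zero]
    rw [map_smul] at h0
    rwa [h2] at h0
  obtain ⟨k, ⟨ho⟩⟩ := aux_homotopy P Z x hZ a b hzero hfg hproj g
  refine ⟨k, ?_⟩
  show f ≫ DerivedCategory.Q.map ((x ^ k : R) • 𝟙 Y) = 0
  haveI : IsIso (DerivedCategory.Q.map t) := inferInstance
  have hfr : f ≫ DerivedCategory.Q.map t = DerivedCategory.Q.map g := by
    have h1 := MorphismProperty.LeftFraction.map_comp_map_s
      (MorphismProperty.LeftFraction.mk ((HomotopyCategory.quotient _ _).map g)
        ((HomotopyCategory.quotient _ _).map t) hs₀)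
      DerivedCategory.Qh (Localization.inverts _ _)
    erw [← hφ] at h1
    exact h1
  have hcomm : ((x ^ k : R) • 𝟙 Y) ≫ t = t ≫ ((x ^ k : R) • 𝟙 Z) := by
    rw [Linear.smul_comp, Linear.comp_smul, Category.id_comp, Category.comp_id]
  rw [← cancel_mono (DerivedCategory.Q.map t), zero_comp, Category.assoc,
    ← DerivedCategory.Q.map_comp, hcomm, DerivedCategory.Q.map_comp, ← Category.assoc,
    hfr, ← DerivedCategory.Q.map_comp]
  have h1 : g ≫ ((x ^ k : R) • 𝟙 Z) = (x ^ k : R) • g := by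
    rw [Linear.comp_smul, Category.comp_id]
  rw [h1]
  have h2 : DerivedCategory.Q.map ((x ^ k : R) • g)
      = DerivedCategory.Q.map (0 : P ⟶ Z) :=
    HomologicalComplexUpToQuasiIso.Q_map_eq_of_homotopy ho
  rw [h2, Functor.map_zero]
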